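/- Let s, t, j > 0 and x ∈ [0,1], and define h(z) = (s·x + z)·s/(s + z) + (t·x + j − z)·t/(t + j − z) for z ∈ [0, j]. Then the maximum of h over [0, j] is attained at z = j·s/(s + t), and h(j·s/(s+t)) = (s + t)·((s + t)·x + j)/(s + t + j). -/

import Mathlib

/-- Let `s, t, j > 0` and `x ∈ [0,1]`, and define
`h(z) = (s·x + z)·s/(s + z) + (t·x + j − z)·t/(t + j − z)` for `z ∈ [0, j]`.
Then the maximum of `h` over `[0, j]` is attained at `z = j·s/(s + t)`, and
`h(j·s/(s+t)) = (s + t)·((s + t)·x + j)/(s + t + j)`. -/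
theorem stmt9 (s t j x : ℝ) (hs : 0 < s) (ht : 0 < t) (hj : 0 < j)
    (hx : x ∈ Set.Icc (0 : ℝ) 1) :
    j * s / (s + t) ∈ Set.Icc (0 : ℝ) j ∧
    IsMaxOn (fun z => (s * x + z) * s / (s + z) + (t * x + j - z) * t / (t + j - z))
      (Set.Icc (0 : ℝ) j) (j * s / (s + t)) ∧
    (s * x + j * s / (s + t)) * s / (s + j * s / (s + t)) +
        (t * x + j - j * s / (s + t)) * t / (t + j - j * s / (s + t)) =
      (s + t) * ((s + t) * x + j) / (s + t + j) := by
  have hst : 0 < s + t := by linarith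
  have hstj : 0 < s + t + j := by linarith
  have h1 : s + j * s / (s + t) = s * (s + t + j) / (s + t) := by field_simp
  have h2 : t + j - j * s / (s + t) = t * (s + t + j) / (s + t) := by field_simp; ring
  have hval : (s * x + j * s / (s + t)) * s / (s + j * s / (s + t)) +
        (t * x + j - j * s / (s + t)) * t / (t + j - j * s / (s + t)) =
      (s + t) * ((s + t) * x + j) / (s + t + j) := by
    rw [h1, h2]
    field_simp
    ring
  refine ⟨⟨by positivity, ?_⟩, ?_, hval⟩
  · rw [div_le_iff₀ hst]; nlinarith
  · rw [isMaxOn_iff]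
    intro z hz
    rw [hval]
    obtain ⟨hz0, hzj⟩ := hz
    have ha : 0 < s + z := by linarith
    have hb : 0 < t + j - z := by linarith
    have hx1 : x ≤ 1 := hx.2
    rw [div_add_div _ _ (ne_of_gt ha) (ne_of_gt hb), div_le_div_iff₀ (by positivity) hstj]
    nlinarith [mul_nonneg (mul_nonneg (sub_nonneg.2 hx1) (sq_nonneg (s*(t+j-z) - t*(s+z)))) hstj.le,
      sq_nonneg (s*(t+j-z) - t*(s+z)), mul_pos ha hb]
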